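/- Recurrence for the dynamic programming table: for i ≥ ℓ and pairwise disjoint J₁,...,J_{ℓ-1} ⊆ X, T^X_i(J₁,...,J_{ℓ-1}) = [ (J₁,...,J_{ℓ-1}) is proper ] · Σ_{J₀ ⊆ X ∩ proper(J₁,...,J_{ℓ-1})} T^X_{i-1}(J₀,J₁,...,J_{ℓ-2}), where proper(J₁,...,J_{ℓ-1}) is the set of vertices v ∉ ⋃_j J_j such that for each j and each x ∈ J_j, j ≥ w(v,x). -/

import Mathlib

/- STATEMENT 9: recurrence of the dynamic programming table:
T^X_i(J₁,…,J_{ℓ-1}) = [window proper] · Σ_{J₀ ⊆ X ∩ proper(J₁,…,J_{ℓ-1})} T^X_{i-1}(J₀,J₁,…,J_{ℓ-2}). -/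

open Classical in
/-- Tuples in `U`: proper and with any `ℓ` consecutive entries pairwise disjoint. -/
noncomputable def TTable {V : Type*} [Fintype V] [DecidableEq V]
    (w : V → V → ℕ) (ℓ s : ℕ) (X : Finset V) (i : ℕ)
    (J : Fin (ℓ - 1) → Finset V) : ℕ :=
  Nat.card {I : Fin s → Finset V //
    (∀ a b : Fin s, ∀ x ∈ I a, ∀ y ∈ I b, x ≠ y →
       w x y ≤ (((a : ℕ) : ℤ) - ((b : ℕ) : ℤ)).natAbs) ∧
    (∀ a b : Fin s, a ≠ b → (((a : ℕ) : ℤ) - ((b : ℕ) : ℤ)).natAbs < ℓ →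
       Disjoint (I a) (I b)) ∧
    (∀ k : Fin s, (k : ℕ) < i - (ℓ - 1) → I k ⊆ X) ∧
    (∀ r : Fin (ℓ - 1), ∀ h : i - (ℓ - 1) + (r : ℕ) < s,
       I ⟨i - (ℓ - 1) + (r : ℕ), h⟩ = J r) ∧
    (∀ k : Fin s, i ≤ (k : ℕ) → I k = ∅)}

/-- The window `(J₁,…,J_{ℓ-1})` is proper. -/
def ProperWindow {V : Type*} (w : V → V → ℕ) (ℓ : ℕ)
    (J : Fin (ℓ - 1) → Finset V) : Prop :=
  ∀ a b : Fin (ℓ - 1), ∀ x ∈ J a, ∀ y ∈ J b, x ≠ y →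
    w x y ≤ (((a : ℕ) : ℤ) - ((b : ℕ) : ℤ)).natAbs

open Classical in
/-- `proper(J₁,…,J_{ℓ-1})`: vertices outside ⋃ J_j compatible with the window. -/
noncomputable def ProperSet {V : Type*} [Fintype V] [DecidableEq V]
    (w : V → V → ℕ) (ℓ : ℕ) (J : Fin (ℓ - 1) → Finset V) : Finset V :=
  Finset.univ.filter (fun v =>
    (∀ j : Fin (ℓ - 1), v ∉ J j) ∧
    ∀ j : Fin (ℓ - 1), ∀ x ∈ J j, w v x ≤ (j : ℕ) + 1)

/-- Prepend `J₀` to the window, dropping its last entry. -/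
def ShiftWindow {V : Type*} (ℓ : ℕ) (J0 : Finset V)
    (J : Fin (ℓ - 1) → Finset V) : Fin (ℓ - 1) → Finset V :=
  fun r => if (r : ℕ) = 0 then J0
    else J ⟨(r : ℕ) - 1, Nat.lt_of_le_of_lt (Nat.sub_le _ _) r.isLt⟩

/-- The predicate defining membership in the table `TTable`. -/
def PP {V : Type*} (w : V → V → ℕ) (ℓ s : ℕ) (X : Finset V) (i : ℕ)
    (J : Fin (ℓ - 1) → Finset V) (I : Fin s → Finset V) : Prop :=
  (∀ a b : Fin s, ∀ x ∈ I a, ∀ y ∈ I b, x ≠ y →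
     w x y ≤ (((a : ℕ) : ℤ) - ((b : ℕ) : ℤ)).natAbs) ∧
  (∀ a b : Fin s, a ≠ b → (((a : ℕ) : ℤ) - ((b : ℕ) : ℤ)).natAbs < ℓ →
     Disjoint (I a) (I b)) ∧
  (∀ k : Fin s, (k : ℕ) < i - (ℓ - 1) → I k ⊆ X) ∧
  (∀ r : Fin (ℓ - 1), ∀ h : i - (ℓ - 1) + (r : ℕ) < s,
     I ⟨i - (ℓ - 1) + (r : ℕ), h⟩ = J r) ∧
  (∀ k : Fin s, i ≤ (k : ℕ) → I k = ∅)

open Classical in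
lemma TTable_eq_card {V : Type*} [Fintype V] [DecidableEq V]
    (w : V → V → ℕ) (ℓ s : ℕ) (X : Finset V) (i : ℕ) (J : Fin (ℓ - 1) → Finset V) :
    TTable w ℓ s X i J = (Finset.univ.filter (PP w ℓ s X i J)).card := by
  have h1 : Nat.card {I : Fin s → Finset V // PP w ℓ s X i J I}
      = (Finset.univ.filter (PP w ℓ s X i J)).card := by
    rw [Nat.card_eq_fintype_card]
    exact Fintype.card_subtype _
  exact h1

section Lemmas

variable {V : Type*} [Fintype V] [DecidableEq V]
variable {w : V → V → ℕ} {ℓ s i : ℕ} {X : Finset V} {J : Fin (ℓ - 1) → Finset V}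

lemma window_of_PP (hl : 2 ≤ ℓ) (hi : ℓ ≤ i) (his : i ≤ s)
    {I : Fin s → Finset V} (h : PP w ℓ s X i J I) : ProperWindow w ℓ J := by
  intro a b x hx y hy hxy
  have hal := a.isLt
  have hbl := b.isLt
  have ha : i - (ℓ - 1) + (a : ℕ) < s := by omega
  have hb : i - (ℓ - 1) + (b : ℕ) < s := by omega
  have key := h.1 ⟨i - (ℓ - 1) + (a : ℕ), ha⟩ ⟨i - (ℓ - 1) + (b : ℕ), hb⟩ x
    (by rw [h.2.2.2.1 a ha]; exact hx) y (by rw [h.2.2.2.1 b hb]; exact hy) hxy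
  simp only [Fin.val_mk] at key ⊢
  omega

lemma lemB (hl : 2 ≤ ℓ) (hi : ℓ ≤ i) (his : i ≤ s)
    {I : Fin s → Finset V} (h : PP w ℓ s X i J I) :
    I ⟨i - ℓ, by omega⟩ ∈ (X ∩ ProperSet w ℓ J).powerset := by
  rw [Finset.mem_powerset]
  intro v hv
  have hnotin : ∀ j : Fin (ℓ - 1), v ∉ J j := by
    intro j hj
    have hjl := j.isLt
    have hpos : i - (ℓ - 1) + (j : ℕ) < s := by omega
    have hd := h.2.1 ⟨i - ℓ, by omega⟩ ⟨i - (ℓ - 1) + (j : ℕ), hpos⟩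
      (by simp only [ne_eq, Fin.mk.injEq]; omega)
      (by simp only [Fin.val_mk]; omega)
    exact (Finset.disjoint_left.mp hd hv) (by rw [h.2.2.2.1 j hpos]; exact hj)
  rw [Finset.mem_inter]
  refine ⟨h.2.2.1 _ (by simp only [Fin.val_mk]; omega) hv, ?_⟩
  rw [ProperSet, Finset.mem_filter]
  refine ⟨Finset.mem_univ _, hnotin, ?_⟩
  intro j x hx
  have hjl := j.isLt
  have hpos : i - (ℓ - 1) + (j : ℕ) < s := by omega
  have hne : x ≠ v := fun e => hnotin j (e ▸ hx)
  have key := h.1 ⟨i - ℓ, by omega⟩ ⟨i - (ℓ - 1) + (j : ℕ), hpos⟩ v hv x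
    (by rw [h.2.2.2.1 j hpos]; exact hx) hne.symm
  simp only [Fin.val_mk] at key
  omega

lemma lemC (hl : 2 ≤ ℓ) (hi : ℓ ≤ i) (his : i ≤ s)
    {I : Fin s → Finset V} (h : PP w ℓ s X i J I) :
    PP w ℓ s X (i - 1) (ShiftWindow ℓ (I ⟨i - ℓ, by omega⟩) J)
      (Function.update I ⟨i - 1, by omega⟩ ∅) := by
  set q : Fin s := ⟨i - 1, by omega⟩ with hq
  have hqv : (q : ℕ) = i - 1 := rfl
  have hsub : ∀ a : Fin s, Function.update I q ∅ a ⊆ I a := by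
    intro a
    rcases eq_or_ne a q with rfl | hne
    · rw [Function.update_self]; exact Finset.empty_subset _
    · rw [Function.update_of_ne hne]
  refine ⟨?_, ?_, ?_, ?_, ?_⟩
  · intro a b x hx y hy hxy
    exact h.1 a b x (hsub a hx) y (hsub b hy) hxy
  · intro a b hab hlt
    exact (h.2.1 a b hab hlt).mono (hsub a) (hsub b)
  · intro k hk
    have hkne : k ≠ q := by
      intro e; rw [e] at hk; omega
    rw [Function.update_of_ne hkne]
    exact h.2.2.1 k (by omega)
  · intro r hr
    have hrl := r.isLt
    have hne : (⟨i - 1 - (ℓ - 1) + (r : ℕ), hr⟩ : Fin s) ≠ q := by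
      simp only [hq, ne_eq, Fin.mk.injEq]; omega
    rw [Function.update_of_ne hne]
    rcases Nat.eq_zero_or_pos (r : ℕ) with h0 | h0
    · simp only [ShiftWindow, h0, if_pos rfl]
      exact congrArg I (Fin.ext (by simp only [Fin.val_mk]; omega))
    · have hpos : i - (ℓ - 1) + ((r : ℕ) - 1) < s := by omega
      have e : (⟨i - 1 - (ℓ - 1) + (r : ℕ), hr⟩ : Fin s)
          = ⟨i - (ℓ - 1) + ((r : ℕ) - 1), hpos⟩ := Fin.ext (by simp only [Fin.val_mk]; omega)
      rw [e, h.2.2.2.1 ⟨(r : ℕ) - 1, by omega⟩ hpos]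
      simp only [ShiftWindow, Fin.val_mk]
      rw [if_neg (by omega)]
  · intro k hk
    rcases eq_or_ne k q with rfl | hne
    · rw [Function.update_self]
    · rw [Function.update_of_ne hne]
      refine h.2.2.2.2 k ?_
      have : (k : ℕ) ≠ i - 1 := fun e => hne (Fin.ext e)
      omega

lemma lemD (hl : 2 ≤ ℓ) (hi : ℓ ≤ i) (his : i ≤ s)
    (hsymm : ∀ x y, w x y = w y x) (hbound : ∀ x y, w x y ≤ ℓ)
    (hPW : ProperWindow w ℓ J)
    (hJdisj : ∀ a b, a ≠ b → Disjoint (J a) (J b))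
    {J0 : Finset V} (hJ0 : J0 ∈ (X ∩ ProperSet w ℓ J).powerset)
    {I' : Fin s → Finset V} (h : PP w ℓ s X (i - 1) (ShiftWindow ℓ J0 J) I') :
    PP w ℓ s X i J (Function.update I' ⟨i - 1, by omega⟩ (J ⟨ℓ - 2, by omega⟩)) := by
  set q : Fin s := ⟨i - 1, by omega⟩ with hq
  have hqv : (q : ℕ) = i - 1 := rfl
  set Jl : Finset V := J ⟨ℓ - 2, by omega⟩ with hJl
  rw [Finset.mem_powerset] at hJ0
  have hJ0P : ∀ v ∈ J0, (∀ j : Fin (ℓ - 1), v ∉ J j) ∧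
      ∀ j : Fin (ℓ - 1), ∀ x ∈ J j, w v x ≤ (j : ℕ) + 1 := by
    intro v hv
    have := hJ0 hv
    rw [Finset.mem_inter, ProperSet, Finset.mem_filter] at this
    exact this.2.2
  -- structure of I'
  have hW' : ∀ r' : ℕ, (hr' : r' < ℓ - 1) → ∀ hp : i - 1 - (ℓ - 1) + r' < s,
      I' ⟨i - 1 - (ℓ - 1) + r', hp⟩ = ShiftWindow ℓ J0 J ⟨r', hr'⟩ :=
    fun r' hr' hp => h.2.2.2.1 ⟨r', hr'⟩ hp
  have hE' : ∀ k : Fin s, i - 1 ≤ (k : ℕ) → I' k = ∅ := h.2.2.2.2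
  have hmem : ∀ (a : Fin s) (x : V), x ∈ Function.update I' q Jl a →
      (a = q ∧ x ∈ Jl) ∨ (a ≠ q ∧ x ∈ I' a) := by
    intro a x hx
    rcases eq_or_ne a q with rfl | hne
    · left; exact ⟨rfl, by rwa [Function.update_self] at hx⟩
    · right; exact ⟨hne, by rwa [Function.update_of_ne hne] at hx⟩
  -- the key mixed claim
  have claim : ∀ b : Fin s, (b : ℕ) ≠ i - 1 → ∀ x ∈ Jl, ∀ y ∈ I' b, x ≠ y →
      w x y ≤ (((i : ℤ) - 1) - ((b : ℕ) : ℤ)).natAbs := by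
    intro b hb x hx y hy hxy
    have hbl := b.isLt
    rcases lt_or_ge (b : ℕ) (i - ℓ) with hlow | hge
    · exact le_trans (hbound x y) (by omega)
    rcases lt_or_ge (b : ℕ) (i - 1) with hmid | hbig
    · -- middle window positions
      have hr' : (b : ℕ) - (i - ℓ) < ℓ - 1 := by omega
      have hp : i - 1 - (ℓ - 1) + ((b : ℕ) - (i - ℓ)) < s := by omega
      have e : b = ⟨i - 1 - (ℓ - 1) + ((b : ℕ) - (i - ℓ)), hp⟩ := Fin.ext (by simp only [Fin.val_mk]; omega)
      have hIb : I' b = ShiftWindow ℓ J0 J ⟨(b : ℕ) - (i - ℓ), hr'⟩ :=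
        (congrArg I' e).trans (hW' _ hr' hp)
      rw [hIb] at hy
      rcases Nat.eq_zero_or_pos ((b : ℕ) - (i - ℓ)) with h0 | h0
      · simp only [ShiftWindow, Fin.val_mk, h0, if_pos rfl] at hy
        have := (hJ0P y hy).2 ⟨ℓ - 2, by omega⟩ x hx
        simp only [Fin.val_mk] at this
        rw [hsymm] at this
        omega
      · simp only [ShiftWindow, Fin.val_mk] at hy
        rw [if_neg (by omega)] at hy
        have key := hPW ⟨ℓ - 2, by omega⟩ ⟨(b : ℕ) - (i - ℓ) - 1, by omega⟩ x hx y hy hxy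
        simp only [Fin.val_mk] at key
        omega
    · rw [hE' b (by omega)] at hy
      simp at hy
  have hdisj2 : ∀ b : Fin s, (b : ℕ) ≠ i - 1 →
      (((i : ℤ) - 1) - ((b : ℕ) : ℤ)).natAbs < ℓ → Disjoint Jl (I' b) := by
    intro b hb hlt
    have hbl := b.isLt
    rcases lt_or_ge (b : ℕ) (i - ℓ) with hlow | hge
    · omega
    rcases lt_or_ge (b : ℕ) (i - 1) with hmid | hbig
    · have hr' : (b : ℕ) - (i - ℓ) < ℓ - 1 := by omega
      have hp : i - 1 - (ℓ - 1) + ((b : ℕ) - (i - ℓ)) < s := by omega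
      have e : b = ⟨i - 1 - (ℓ - 1) + ((b : ℕ) - (i - ℓ)), hp⟩ := Fin.ext (by simp only [Fin.val_mk]; omega)
      have hIb : I' b = ShiftWindow ℓ J0 J ⟨(b : ℕ) - (i - ℓ), hr'⟩ :=
        (congrArg I' e).trans (hW' _ hr' hp)
      rw [hIb]
      rcases Nat.eq_zero_or_pos ((b : ℕ) - (i - ℓ)) with h0 | h0
      · simp only [ShiftWindow, Fin.val_mk, h0, if_pos rfl]
        rw [Finset.disjoint_right]
        intro v hv
        exact (hJ0P v hv).1 ⟨ℓ - 2, by omega⟩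
      · simp only [ShiftWindow, Fin.val_mk]
        rw [if_neg (by omega)]
        exact hJdisj ⟨ℓ - 2, by omega⟩ ⟨(b : ℕ) - (i - ℓ) - 1, by omega⟩
          (by simp only [ne_eq, Fin.mk.injEq]; omega)
    · rw [hE' b (by omega)]
      exact Finset.disjoint_empty_right _
  refine ⟨?_, ?_, ?_, ?_, ?_⟩
  · -- properness
    intro a b x hx y hy hxy
    rcases hmem a x hx with ⟨rfl, hx'⟩ | ⟨hna, hx'⟩ <;>
      rcases hmem b y hy with hb' | hb'
    · obtain ⟨e, hy'⟩ := hb'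
      rw [e]
      have key := hPW ⟨ℓ - 2, by omega⟩ ⟨ℓ - 2, by omega⟩ x hx' y hy' hxy
      simp only [Fin.val_mk] at key
      omega
    · obtain ⟨hnb, hy'⟩ := hb'
      have hbv : (b : ℕ) ≠ i - 1 := fun e => hnb (Fin.ext e)
      have := claim b hbv x hx' y hy' hxy
      omega
    · obtain ⟨e, hy'⟩ := hb'
      rw [e]
      have hav : (a : ℕ) ≠ i - 1 := fun e' => hna (Fin.ext e')
      have := claim a hav y hy' x hx' (Ne.symm hxy)
      rw [hsymm] at this
      omega
    · obtain ⟨hnb, hy'⟩ := hb'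
      exact h.1 a b x hx' y hy' hxy
  · -- disjointness
    intro a b hab hlt
    rcases eq_or_ne a q with rfl | hna
    · rcases eq_or_ne b q with rfl | hnb
      · exact absurd rfl hab
      · rw [Function.update_self, Function.update_of_ne hnb]
        have hbv : (b : ℕ) ≠ i - 1 := fun e => hnb (Fin.ext e)
        exact hdisj2 b hbv (by omega)
    · rw [Function.update_of_ne hna]
      rcases eq_or_ne b q with rfl | hnb
      · rw [Function.update_self]
        have hav : (a : ℕ) ≠ i - 1 := fun e => hna (Fin.ext e)
        exact (hdisj2 a hav (by omega)).symm
      · rw [Function.update_of_ne hnb]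
        exact h.2.1 a b hab hlt
  · -- subsets of X
    intro k hk
    have hkne : k ≠ q := by
      intro e; rw [e] at hk; simp only [hqv] at hk; omega
    rw [Function.update_of_ne hkne]
    rcases lt_or_ge (k : ℕ) (i - ℓ) with hlow | hge
    · exact h.2.2.1 k (by omega)
    · have hkv : (k : ℕ) = i - ℓ := by omega
      have hp : i - 1 - (ℓ - 1) + 0 < s := by omega
      have e : k = ⟨i - 1 - (ℓ - 1) + 0, hp⟩ := Fin.ext (by simp only [Fin.val_mk]; omega)
      rw [(congrArg I' e).trans (hW' 0 (by omega) hp)]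
      simp only [ShiftWindow, Fin.val_mk, if_pos rfl]
      exact fun v hv => (Finset.mem_inter.mp (hJ0 hv)).1
  · -- window values
    intro r hr
    have hrl := r.isLt
    rcases eq_or_ne (r : ℕ) (ℓ - 2) with hlast | hlt
    · have e : (⟨i - (ℓ - 1) + (r : ℕ), hr⟩ : Fin s) = q := by
        simp only [hq]; exact Fin.ext (by simp only [Fin.val_mk]; omega)
      rw [e, Function.update_self, hJl]
      exact congrArg J (Fin.ext (by simp only [Fin.val_mk]; omega))
    · have hne : (⟨i - (ℓ - 1) + (r : ℕ), hr⟩ : Fin s) ≠ q := by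
        simp only [hq, ne_eq, Fin.mk.injEq]; omega
      rw [Function.update_of_ne hne]
      have hp : i - 1 - (ℓ - 1) + ((r : ℕ) + 1) < s := by omega
      have e : (⟨i - (ℓ - 1) + (r : ℕ), hr⟩ : Fin s)
          = ⟨i - 1 - (ℓ - 1) + ((r : ℕ) + 1), hp⟩ := Fin.ext (by simp only [Fin.val_mk]; omega)
      rw [e, hW' _ (by omega) hp]
      simp only [ShiftWindow, Fin.val_mk]
      rw [if_neg (by omega)]
      exact congrArg J (Fin.ext (by simp only [Fin.val_mk]; omega))
  · -- empties
    intro k hk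
    have hkne : k ≠ q := by
      intro e; rw [e] at hk; simp only [hqv] at hk; omega
    rw [Function.update_of_ne hkne]
    exact hE' k (by omega)

end Lemmas

open Classical in
theorem stmt_9 {V : Type*} [Fintype V] [DecidableEq V] (w : V → V → ℕ) (ℓ s i : ℕ)
    (hl : 2 ≤ ℓ) (hsymm : ∀ x y, w x y = w y x) (hbound : ∀ x y, w x y ≤ ℓ)
    (hdiag : ∀ v, w v v = 0) (hi : ℓ ≤ i) (his : i ≤ s)
    (X : Finset V) (J : Fin (ℓ - 1) → Finset V)
    (hJX : ∀ r, J r ⊆ X) (hJdisj : ∀ a b, a ≠ b → Disjoint (J a) (J b)) :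
    TTable w ℓ s X i J =
      (if ProperWindow w ℓ J then 1 else 0) *
        ∑ J0 ∈ (X ∩ ProperSet w ℓ J).powerset,
          TTable w ℓ s X (i - 1) (ShiftWindow ℓ J0 J) := by
  by_cases hPW : ProperWindow w ℓ J
  · rw [if_pos hPW, one_mul, TTable_eq_card]
    rw [Finset.card_eq_sum_card_fiberwise
      (f := fun I : Fin s → Finset V => I ⟨i - ℓ, by omega⟩)
      (t := (X ∩ ProperSet w ℓ J).powerset)
      (fun I hI => lemB hl hi his ((Finset.mem_filter.mp hI).2))]
    refine Finset.sum_congr rfl ?_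
    intro J0 hJ0
    rw [TTable_eq_card]
    set q : Fin s := ⟨i - 1, by omega⟩ with hq
    refine Finset.card_bij' (fun I _ => Function.update I q ∅)
      (fun I' _ => Function.update I' q (J ⟨ℓ - 2, by omega⟩)) ?_ ?_ ?_ ?_
    · intro I hI
      rw [Finset.mem_filter] at hI ⊢
      obtain ⟨hIF, hfib⟩ := hI
      rw [Finset.mem_filter] at hIF
      refine ⟨Finset.mem_univ _, ?_⟩
      have := lemC hl hi his hIF.2
      rwa [hfib] at this
    · intro I' hI'
      rw [Finset.mem_filter] at hI' ⊢
      refine ⟨?_, ?_⟩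
      · rw [Finset.mem_filter]
        exact ⟨Finset.mem_univ _, lemD hl hi his hsymm hbound hPW hJdisj hJ0 hI'.2⟩
      · show Function.update I' q (J ⟨ℓ - 2, by omega⟩) ⟨i - ℓ, by omega⟩ = J0
        have hne : (⟨i - ℓ, by omega⟩ : Fin s) ≠ q := by
          simp only [hq, ne_eq, Fin.mk.injEq]; omega
        rw [Function.update_of_ne hne]
        have hp : i - 1 - (ℓ - 1) + 0 < s := by omega
        have e : (⟨i - ℓ, by omega⟩ : Fin s) = ⟨i - 1 - (ℓ - 1) + 0, hp⟩ :=
          Fin.ext (by simp only [Fin.val_mk]; omega)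
        rw [e, hI'.2.2.2.2.1 ⟨0, by omega⟩ hp]
        simp [ShiftWindow]
    · intro I hI
      rw [Finset.mem_filter, Finset.mem_filter] at hI
      show Function.update (Function.update I q ∅) q (J ⟨ℓ - 2, by omega⟩) = I
      rw [Function.update_idem]
      have hp : i - (ℓ - 1) + (ℓ - 2) < s := by omega
      have e : q = ⟨i - (ℓ - 1) + (ℓ - 2), hp⟩ := Fin.ext (by show i - 1 = i - (ℓ - 1) + (ℓ - 2); omega)
      have hIq : I q = J ⟨ℓ - 2, by omega⟩ := by
        rw [e]; exact hI.1.2.2.2.2.1 ⟨ℓ - 2, by omega⟩ hp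
      rw [← hIq, Function.update_eq_self]
    · intro I' hI'
      rw [Finset.mem_filter] at hI'
      show Function.update (Function.update I' q (J ⟨ℓ - 2, by omega⟩)) q ∅ = I'
      rw [Function.update_idem]
      have hI'q : I' q = ∅ := hI'.2.2.2.2.2 q (by simp only [hq, Fin.val_mk]; omega)
      rw [← hI'q, Function.update_eq_self]
  · rw [if_neg hPW, zero_mul, TTable_eq_card, Finset.card_eq_zero,
      Finset.filter_eq_empty_iff]
    exact fun {I} _ h => hPW (window_of_PP hl hi his h)
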